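/- There exists a unique m* ∈ (0,1) such that E(m*)/K(m*) = 1/2 (equivalently, 2·E(m*) = K(m*)), and this m* satisfies 0.826 < m* < 0.827. (This is the critical pointedness at which the zero-average cnoidal curve V = 2E(m)/K(m) − (4−2m)/3 crosses the bifurcation line V = (2m−1)/3 into the forbidden wedge.) -/

import Mathlib

set_option maxHeartbeats 4000000

open Real

/-- Complete elliptic integral of the first kind `K(m) = ∫₀^{π/2} dθ/√(1 - m sin²θ)`. -/
noncomputable def ellK (m : ℝ) : ℝ :=
  ∫ θ in (0:ℝ)..(π / 2), 1 / Real.sqrt (1 - m * Real.sin θ ^ 2)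

/-- Complete elliptic integral of the second kind `E(m) = ∫₀^{π/2} √(1 - m sin²θ) dθ`. -/
noncomputable def ellE (m : ℝ) : ℝ :=
  ∫ θ in (0:ℝ)..(π / 2), Real.sqrt (1 - m * Real.sin θ ^ 2)

/-! ### Generic facts about the integrands -/

lemma one_sub_pos_aux (m θ : ℝ) (hm : m < 1) : 0 < 1 - m * Real.sin θ ^ 2 := by
  rcases le_or_gt m 0 with h | h
  · nlinarith [sq_nonneg (Real.sin θ)]
  · nlinarith [Real.sin_sq_le_one θ]

lemma contE (m : ℝ) : Continuous fun θ : ℝ => Real.sqrt (1 - m * Real.sin θ ^ 2) := by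
  fun_prop

lemma contK (m : ℝ) (hm : m < 1) :
    Continuous fun θ : ℝ => 1 / Real.sqrt (1 - m * Real.sin θ ^ 2) := by
  apply Continuous.div continuous_const (by fun_prop)
  intro θ
  exact ne_of_gt (Real.sqrt_pos.mpr (one_sub_pos_aux m θ hm))

lemma f_repr (m : ℝ) (hm : m < 1) :
    2 * ellE m - ellK m = ∫ θ in (0:ℝ)..(π/2),
      (2 * Real.sqrt (1 - m * Real.sin θ ^ 2) - 1 / Real.sqrt (1 - m * Real.sin θ ^ 2)) := by
  unfold ellE ellK
  rw [intervalIntegral.integral_sub (f := fun θ => 2 * Real.sqrt (1 - m * Real.sin θ ^ 2))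
      ((continuous_const.mul (contE m)).intervalIntegrable _ _)
      ((contK m hm).intervalIntegrable _ _), intervalIntegral.integral_const_mul]

lemma K_ge (m : ℝ) (hm0 : 0 ≤ m) (hm1 : m < 1) : π / 2 ≤ ellK m := by
  have h : ∫ θ in (0:ℝ)..(π/2), (1:ℝ) ≤ ellK m := by
    apply intervalIntegral.integral_mono_on (by positivity)
      (intervalIntegrable_const) ((contK m hm1).intervalIntegrable _ _)
    intro θ _
    rw [le_div_iff₀ (Real.sqrt_pos.mpr (one_sub_pos_aux m θ hm1)), one_mul]
    refine le_trans (Real.sqrt_le_sqrt (by nlinarith [sq_nonneg (Real.sin θ)] :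
      1 - m * Real.sin θ ^ 2 ≤ 1)) (by simp)
  simpa using h

lemma integrand_mono {y1 y2 : ℝ} (h0 : 0 ≤ y1) (h12 : y1 ≤ y2) (h2 : y2 < 1) :
    2 * Real.sqrt (1 - y2) - 1 / Real.sqrt (1 - y2) ≤
      2 * Real.sqrt (1 - y1) - 1 / Real.sqrt (1 - y1) := by
  have h1 : Real.sqrt (1 - y2) ≤ Real.sqrt (1 - y1) := Real.sqrt_le_sqrt (by linarith)
  have h2' : 0 < Real.sqrt (1 - y2) := Real.sqrt_pos.mpr (by linarith)
  have h3 : 1 / Real.sqrt (1 - y1) ≤ 1 / Real.sqrt (1 - y2) :=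
    one_div_le_one_div_of_le h2' h1
  linarith

lemma integrand_strict_mono {y1 y2 : ℝ} (h0 : 0 ≤ y1) (h12 : y1 < y2) (h2 : y2 < 1) :
    2 * Real.sqrt (1 - y2) - 1 / Real.sqrt (1 - y2) <
      2 * Real.sqrt (1 - y1) - 1 / Real.sqrt (1 - y1) := by
  have h1 : Real.sqrt (1 - y2) < Real.sqrt (1 - y1) := Real.sqrt_lt_sqrt (by linarith) (by linarith)
  have h2' : 0 < Real.sqrt (1 - y2) := Real.sqrt_pos.mpr (by linarith)
  have h3 : 1 / Real.sqrt (1 - y1) < 1 / Real.sqrt (1 - y2) :=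
    one_div_lt_one_div_of_lt h2' h1
  linarith

lemma f_strict (m1 m2 : ℝ) (h0 : 0 ≤ m1) (h12 : m1 < m2) (h2 : m2 < 1) :
    2 * ellE m2 - ellK m2 < 2 * ellE m1 - ellK m1 := by
  rw [f_repr m1 (by linarith), f_repr m2 h2]
  apply intervalIntegral.integral_lt_integral_of_continuousOn_of_le_of_exists_lt
    (by positivity)
    ((continuous_const.mul (contE m2)).sub (contK m2 h2)).continuousOn
    ((continuous_const.mul (contE m1)).sub (contK m1 (by linarith))).continuousOn
  · intro θ _
    apply integrand_mono (by positivity)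
      (by nlinarith [sq_nonneg (Real.sin θ)])
      (by nlinarith [Real.sin_sq_le_one θ, sq_nonneg (Real.sin θ)])
  · refine ⟨π/2, ⟨by positivity, le_refl _⟩, ?_⟩
    show 2 * Real.sqrt (1 - m2 * Real.sin (π/2) ^ 2) - 1 / Real.sqrt (1 - m2 * Real.sin (π/2) ^ 2) <
      2 * Real.sqrt (1 - m1 * Real.sin (π/2) ^ 2) - 1 / Real.sqrt (1 - m1 * Real.sin (π/2) ^ 2)
    rw [Real.sin_pi_div_two]
    apply integrand_strict_mono (by linarith) (by nlinarith) (by nlinarith)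

lemma contf : ContinuousOn (fun m => 2 * ellE m - ellK m)
    (Set.Icc (826/1000 : ℝ) (827/1000)) := by
  have cE : Continuous fun m : ℝ => ellE m := by
    apply intervalIntegral.continuous_parametric_intervalIntegral_of_continuous'
    fun_prop
  have hc : Continuous (Function.uncurry fun (m θ : ℝ) =>
      1 / Real.sqrt (max (1 - m * Real.sin θ ^ 2) (1/8))) := by
    apply Continuous.div continuous_const (by fun_prop)
    intro p
    refine ne_of_gt (Real.sqrt_pos.mpr ?_)
    exact lt_of_lt_of_le (by norm_num) (le_max_right _ _)
  have cK' : Continuous fun m : ℝ => ∫ θ in (0:ℝ)..(π/2),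
      1 / Real.sqrt (max (1 - m * Real.sin θ ^ 2) (1/8)) :=
    intervalIntegral.continuous_parametric_intervalIntegral_of_continuous' hc _ _
  apply ContinuousOn.congr ((continuous_const.mul cE).sub cK').continuousOn
  intro m hm
  have : ellK m = ∫ θ in (0:ℝ)..(π/2), 1 / Real.sqrt (max (1 - m * Real.sin θ ^ 2) (1/8)) := by
    unfold ellK
    apply intervalIntegral.integral_congr
    intro θ _
    show 1 / Real.sqrt (1 - m * Real.sin θ ^ 2)
        = 1 / Real.sqrt (max (1 - m * Real.sin θ ^ 2) (1/8))
    rw [max_eq_left (by nlinarith [Real.sin_sq_le_one θ, sq_nonneg (Real.sin θ), hm.1, hm.2])]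
  show 2 * ellE m - ellK m
      = 2 * ellE m - ∫ θ in (0:ℝ)..(π/2), 1 / Real.sqrt (max (1 - m * Real.sin θ ^ 2) (1/8))
  rw [this]

lemma intSin : ∀ k : ℕ, (∫ θ in (0:ℝ)..(π/2), Real.sin θ ^ (2*k)) =
    (∏ i ∈ Finset.range k, ((2*(i:ℝ)+1)/(2*(i:ℝ)+2))) * (π/2) := by
  intro k
  induction k with
  | zero => simp
  | succ n ih =>
    have h := integral_sin_pow (a := 0) (b := π/2) (2*n)
    simp only [Real.sin_zero, Real.cos_pi_div_two, Real.sin_pi_div_two] at h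
    rw [show 2*(n+1) = 2*n+2 from rfl, h, ih, Finset.prod_range_succ]
    push_cast
    ring

/-! ### The approximating polynomials -/

noncomputable def Spoly (y : ℝ) : ℝ := (1:ℝ) + (1/2:ℝ)*y^1 + (3/8:ℝ)*y^2 + (5/16:ℝ)*y^3 + (35/128:ℝ)*y^4 + (63/256:ℝ)*y^5 + (231/1024:ℝ)*y^6 + (429/2048:ℝ)*y^7 + (6435/32768:ℝ)*y^8 + (12155/65536:ℝ)*y^9 + (46189/262144:ℝ)*y^10 + (88179/524288:ℝ)*y^11 + (676039/4194304:ℝ)*y^12 + (1300075/8388608:ℝ)*y^13 + (5014575/33554432:ℝ)*y^14 + (9694845/67108864:ℝ)*y^15 + (300540195/2147483648:ℝ)*y^16 + (583401555/4294967296:ℝ)*y^17 + (2268783825/17179869184:ℝ)*y^18 + (4418157975/34359738368:ℝ)*y^19 + (34461632205/274877906944:ℝ)*y^20 + (67282234305/549755813888:ℝ)*y^21 + (263012370465/2199023255552:ℝ)*y^22 + (514589420475/4398046511104:ℝ)*y^23 + (8061900920775/70368744177664:ℝ)*y^24 + (15801325804719/140737488355328:ℝ)*y^25 + (61989816618513/562949953421312:ℝ)*y^26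 + (121683714103007/1125899906842624:ℝ)*y^27 + (956086325095055/9007199254740992:ℝ)*y^28 + (1879204156221315/18014398509481984:ℝ)*y^29 + (7391536347803839/72057594037927936:ℝ)*y^30 + (14544636039226909/144115188075855872:ℝ)*y^31 + (916312070471295267/9223372036854775808:ℝ)*y^32 + (1804857108504066435/18446744073709551616:ℝ)*y^33 + (7113260368810144185/73786976294838206464:ℝ)*y^34 + (14023284727082855679/147573952589676412928:ℝ)*y^35 + (110628135069209194801/1180591620717411303424:ℝ)*y^36 + (218266320541953276229/2361183241434822606848:ℝ)*y^37 + (861577581086657669325/9444732965739290427392:ℝ)*y^38 + (1701063429324939500975/18889465931478580854784:ℝ)*y^39 + (26876802183334044115405/302231454903657293676544:ℝ)*y^40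

noncomputable def Gpoly (y : ℝ) : ℝ := (53098072606098965203605/302231454903657293676544:ℝ) + (103667665564288455873705/1208925819614629174706176:ℝ)*y^1 + (151885184431399365582405/2417851639229258349412352:ℝ)*y^2 + (989554989477298896976275/19342813113834066795298816:ℝ)*y^3 + (1693238537550044779270515/38685626227668133590597632:ℝ)*y^4 + (5963144414850157700909205/154742504910672534362390528:ℝ)*y^5 + (10699826503241772328581765/309485009821345068724781056:ℝ)*y^6 + (311313999689558232988736115/9903520314283042199192993792:ℝ)*y^7 + (285900611959798377234553575/9903520314283042199192993792:ℝ)*y^8 + (1058467598944497992161702791/39614081257132168796771975168:ℝ)*y^9 + (1971655331367202142261995395/79228162514264337593543950336:ℝ)*y^10 + (14766733285973940520018161315/633825300114114700748351602688:ℝ)*y^11 + (27768888380542190034499561215/1267650600228229401496703205376:ℝ)*y^12 + (104825575795494022210005466125/5070602400912917605986812821504:ℝ)*y^13 + (198487908454325044652192168325/10141204801825835211973625643008:ℝ)*y^14 + (3015125847472842344954728652175/162259276829213363391578010288128:ℝ)*y^15 + (11478636998273803313248703816175/649037107316853453566312041152512:ℝ)*y^16 + (43795773212480778970021930787475/2596148429267413814265248164610048:ℝ)*y^17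 + (83715084389205255470004255648375/5192296858534827628530496329220096:ℝ)*y^18 + (641228172707491483126383473966325/41538374868278621028243970633760768:ℝ)*y^19 + (1229896659127483664357161745148525/83076749736557242056487941267521536:ℝ)*y^20 + (4724994691978243693636346427982275/332306998946228968225951765070086144:ℝ)*y^21 + (9088626153545452876792568237374275/664613997892457936451903530140172288:ℝ)*y^22 + (1120271962839189517639431780563307375/85070591730234615865843651857942052864:ℝ)*y^23 + (270014267966368755533606634289617675/21267647932558653966460912964485513216:ℝ)*y^24 + (1042418719361072104696408642681736115/85070591730234615865843651857942052864:ℝ)*y^25 + (2014225837755091104711889489820162895/170141183460469231731687303715884105728:ℝ)*y^26 + (15582823420192436847128365094447491155/1361129467683753853853498429727072845824:ℝ)*y^27 + (30165507034948092033260913795669573975/2722258935367507707706996859454145691648:ℝ)*y^28 + (116887624796503296519029728037801413245/10889035741470030830827987437816582766592:ℝ)*y^29 + (226641263103079161795113979716488186245/21778071482940061661655974875633165533184:ℝ)*y^30 + (3518219750894035303708382244272796898305/348449143727040986586495598010130648530944:ℝ)*y^31 + (27326446558313945441132229212365422484095/2787593149816327892691964784081045188247552:ℝ)*y^32 + (106194913119737650383433601648381596795275/11150372599265311570767859136324180752990208:ℝ)*y^33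 + (206476227155944812000417175283402336043519/22300745198530623141535718272648361505980416:ℝ)*y^34 + (1606788685010547973085953206152792615075505/178405961588244985132285746181186892047843328:ℝ)*y^35 + (3127789229551557309802237915007384181438465/356811923176489970264571492362373784095686656:ℝ)*y^36 + (12183855342556689978100054968992727986046855/1427247692705959881058285969449495136382746624:ℝ)*y^37 + (23742689458346647692166995858963177454488375/2854495385411919762116571938898990272765493248:ℝ)*y^38 + (740650153718577732879240183641400043362321975/91343852333181432387730302044767688728495783936:ℝ)*y^39 + (722362495602069640709382401329266708958314025/91343852333181432387730302044767688728495783936:ℝ)*y^40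

lemma Sid (y : ℝ) : 1 - (1-y) * (Spoly y)^2 = y^41 * Gpoly y := by
  unfold Spoly Gpoly; ring

lemma Gpoly_nonneg (y : ℝ) (hy0 : 0 ≤ y) : 0 ≤ Gpoly y := by
  unfold Gpoly
  have h1 : (0:ℝ) ≤ (103667665564288455873705/1208925819614629174706176:ℝ)*y^1 := mul_nonneg (by norm_num) (pow_nonneg hy0 1)
  have h2 : (0:ℝ) ≤ (151885184431399365582405/2417851639229258349412352:ℝ)*y^2 := mul_nonneg (by norm_num) (pow_nonneg hy0 2)
  have h3 : (0:ℝ) ≤ (989554989477298896976275/19342813113834066795298816:ℝ)*y^3 := mul_nonneg (by norm_num) (pow_nonneg hy0 3)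
  have h4 : (0:ℝ) ≤ (1693238537550044779270515/38685626227668133590597632:ℝ)*y^4 := mul_nonneg (by norm_num) (pow_nonneg hy0 4)
  have h5 : (0:ℝ) ≤ (5963144414850157700909205/154742504910672534362390528:ℝ)*y^5 := mul_nonneg (by norm_num) (pow_nonneg hy0 5)
  have h6 : (0:ℝ) ≤ (10699826503241772328581765/309485009821345068724781056:ℝ)*y^6 := mul_nonneg (by norm_num) (pow_nonneg hy0 6)
  have h7 : (0:ℝ) ≤ (311313999689558232988736115/9903520314283042199192993792:ℝ)*y^7 := mul_nonneg (by norm_num) (pow_nonneg hy0 7)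
  have h8 : (0:ℝ) ≤ (285900611959798377234553575/9903520314283042199192993792:ℝ)*y^8 := mul_nonneg (by norm_num) (pow_nonneg hy0 8)
  have h9 : (0:ℝ) ≤ (1058467598944497992161702791/39614081257132168796771975168:ℝ)*y^9 := mul_nonneg (by norm_num) (pow_nonneg hy0 9)
  have h10 : (0:ℝ) ≤ (1971655331367202142261995395/79228162514264337593543950336:ℝ)*y^10 := mul_nonneg (by norm_num) (pow_nonneg hy0 10)
  have h11 : (0:ℝ) ≤ (14766733285973940520018161315/633825300114114700748351602688:ℝ)*y^11 := mul_nonneg (by norm_num) (pow_nonneg hy0 11)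
  have h12 : (0:ℝ) ≤ (27768888380542190034499561215/1267650600228229401496703205376:ℝ)*y^12 := mul_nonneg (by norm_num) (pow_nonneg hy0 12)
  have h13 : (0:ℝ) ≤ (104825575795494022210005466125/5070602400912917605986812821504:ℝ)*y^13 := mul_nonneg (by norm_num) (pow_nonneg hy0 13)
  have h14 : (0:ℝ) ≤ (198487908454325044652192168325/10141204801825835211973625643008:ℝ)*y^14 := mul_nonneg (by norm_num) (pow_nonneg hy0 14)
  have h15 : (0:ℝ) ≤ (3015125847472842344954728652175/162259276829213363391578010288128:ℝ)*y^15 := mul_nonneg (by norm_num) (pow_nonneg hy0 15)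
  have h16 : (0:ℝ) ≤ (11478636998273803313248703816175/649037107316853453566312041152512:ℝ)*y^16 := mul_nonneg (by norm_num) (pow_nonneg hy0 16)
  have h17 : (0:ℝ) ≤ (43795773212480778970021930787475/2596148429267413814265248164610048:ℝ)*y^17 := mul_nonneg (by norm_num) (pow_nonneg hy0 17)
  have h18 : (0:ℝ) ≤ (83715084389205255470004255648375/5192296858534827628530496329220096:ℝ)*y^18 := mul_nonneg (by norm_num) (pow_nonneg hy0 18)
  have h19 : (0:ℝ) ≤ (641228172707491483126383473966325/41538374868278621028243970633760768:ℝ)*y^19 := mul_nonneg (by norm_num) (pow_nonneg hy0 19)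
  have h20 : (0:ℝ) ≤ (1229896659127483664357161745148525/83076749736557242056487941267521536:ℝ)*y^20 := mul_nonneg (by norm_num) (pow_nonneg hy0 20)
  have h21 : (0:ℝ) ≤ (4724994691978243693636346427982275/332306998946228968225951765070086144:ℝ)*y^21 := mul_nonneg (by norm_num) (pow_nonneg hy0 21)
  have h22 : (0:ℝ) ≤ (9088626153545452876792568237374275/664613997892457936451903530140172288:ℝ)*y^22 := mul_nonneg (by norm_num) (pow_nonneg hy0 22)
  have h23 : (0:ℝ) ≤ (1120271962839189517639431780563307375/85070591730234615865843651857942052864:ℝ)*y^23 := mul_nonneg (by norm_num) (pow_nonneg hy0 23)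
  have h24 : (0:ℝ) ≤ (270014267966368755533606634289617675/21267647932558653966460912964485513216:ℝ)*y^24 := mul_nonneg (by norm_num) (pow_nonneg hy0 24)
  have h25 : (0:ℝ) ≤ (1042418719361072104696408642681736115/85070591730234615865843651857942052864:ℝ)*y^25 := mul_nonneg (by norm_num) (pow_nonneg hy0 25)
  have h26 : (0:ℝ) ≤ (2014225837755091104711889489820162895/170141183460469231731687303715884105728:ℝ)*y^26 := mul_nonneg (by norm_num) (pow_nonneg hy0 26)
  have h27 : (0:ℝ) ≤ (15582823420192436847128365094447491155/1361129467683753853853498429727072845824:ℝ)*y^27 := mul_nonneg (by norm_num) (pow_nonneg hy0 27)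
  have h28 : (0:ℝ) ≤ (30165507034948092033260913795669573975/2722258935367507707706996859454145691648:ℝ)*y^28 := mul_nonneg (by norm_num) (pow_nonneg hy0 28)
  have h29 : (0:ℝ) ≤ (116887624796503296519029728037801413245/10889035741470030830827987437816582766592:ℝ)*y^29 := mul_nonneg (by norm_num) (pow_nonneg hy0 29)
  have h30 : (0:ℝ) ≤ (226641263103079161795113979716488186245/21778071482940061661655974875633165533184:ℝ)*y^30 := mul_nonneg (by norm_num) (pow_nonneg hy0 30)
  have h31 : (0:ℝ) ≤ (3518219750894035303708382244272796898305/348449143727040986586495598010130648530944:ℝ)*y^31 := mul_nonneg (by norm_num) (pow_nonneg hy0 31)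
  have h32 : (0:ℝ) ≤ (27326446558313945441132229212365422484095/2787593149816327892691964784081045188247552:ℝ)*y^32 := mul_nonneg (by norm_num) (pow_nonneg hy0 32)
  have h33 : (0:ℝ) ≤ (106194913119737650383433601648381596795275/11150372599265311570767859136324180752990208:ℝ)*y^33 := mul_nonneg (by norm_num) (pow_nonneg hy0 33)
  have h34 : (0:ℝ) ≤ (206476227155944812000417175283402336043519/22300745198530623141535718272648361505980416:ℝ)*y^34 := mul_nonneg (by norm_num) (pow_nonneg hy0 34)
  have h35 : (0:ℝ) ≤ (1606788685010547973085953206152792615075505/178405961588244985132285746181186892047843328:ℝ)*y^35 := mul_nonneg (by norm_num) (pow_nonneg hy0 35)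
  have h36 : (0:ℝ) ≤ (3127789229551557309802237915007384181438465/356811923176489970264571492362373784095686656:ℝ)*y^36 := mul_nonneg (by norm_num) (pow_nonneg hy0 36)
  have h37 : (0:ℝ) ≤ (12183855342556689978100054968992727986046855/1427247692705959881058285969449495136382746624:ℝ)*y^37 := mul_nonneg (by norm_num) (pow_nonneg hy0 37)
  have h38 : (0:ℝ) ≤ (23742689458346647692166995858963177454488375/2854495385411919762116571938898990272765493248:ℝ)*y^38 := mul_nonneg (by norm_num) (pow_nonneg hy0 38)
  have h39 : (0:ℝ) ≤ (740650153718577732879240183641400043362321975/91343852333181432387730302044767688728495783936:ℝ)*y^39 := mul_nonneg (by norm_num) (pow_nonneg hy0 39)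
  have h40 : (0:ℝ) ≤ (722362495602069640709382401329266708958314025/91343852333181432387730302044767688728495783936:ℝ)*y^40 := mul_nonneg (by norm_num) (pow_nonneg hy0 40)
  linarith

lemma Gpoly_le (y : ℝ) (hy0 : 0 ≤ y) (hy1 : y ≤ 827/1000) : Gpoly y ≤ 21/50 := by
  unfold Gpoly
  have h1 : (103667665564288455873705/1208925819614629174706176:ℝ)*y^1 ≤ (103667665564288455873705/1208925819614629174706176:ℝ)*(827/1000:ℝ)^1 := mul_le_mul_of_nonneg_left (pow_le_pow_left₀ hy0 hy1 1) (by norm_num)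
  have h2 : (151885184431399365582405/2417851639229258349412352:ℝ)*y^2 ≤ (151885184431399365582405/2417851639229258349412352:ℝ)*(827/1000:ℝ)^2 := mul_le_mul_of_nonneg_left (pow_le_pow_left₀ hy0 hy1 2) (by norm_num)
  have h3 : (989554989477298896976275/19342813113834066795298816:ℝ)*y^3 ≤ (989554989477298896976275/19342813113834066795298816:ℝ)*(827/1000:ℝ)^3 := mul_le_mul_of_nonneg_left (pow_le_pow_left₀ hy0 hy1 3) (by norm_num)
  have h4 : (1693238537550044779270515/38685626227668133590597632:ℝ)*y^4 ≤ (1693238537550044779270515/38685626227668133590597632:ℝ)*(827/1000:ℝ)^4 := mul_le_mul_of_nonneg_left (pow_le_pow_left₀ hy0 hy1 4) (by norm_num)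
  have h5 : (5963144414850157700909205/154742504910672534362390528:ℝ)*y^5 ≤ (5963144414850157700909205/154742504910672534362390528:ℝ)*(827/1000:ℝ)^5 := mul_le_mul_of_nonneg_left (pow_le_pow_left₀ hy0 hy1 5) (by norm_num)
  have h6 : (10699826503241772328581765/309485009821345068724781056:ℝ)*y^6 ≤ (10699826503241772328581765/309485009821345068724781056:ℝ)*(827/1000:ℝ)^6 := mul_le_mul_of_nonneg_left (pow_le_pow_left₀ hy0 hy1 6) (by norm_num)
  have h7 : (311313999689558232988736115/9903520314283042199192993792:ℝ)*y^7 ≤ (311313999689558232988736115/9903520314283042199192993792:ℝ)*(827/1000:ℝ)^7 := mul_le_mul_of_nonneg_left (pow_le_pow_left₀ hy0 hy1 7) (by norm_num)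
  have h8 : (285900611959798377234553575/9903520314283042199192993792:ℝ)*y^8 ≤ (285900611959798377234553575/9903520314283042199192993792:ℝ)*(827/1000:ℝ)^8 := mul_le_mul_of_nonneg_left (pow_le_pow_left₀ hy0 hy1 8) (by norm_num)
  have h9 : (1058467598944497992161702791/39614081257132168796771975168:ℝ)*y^9 ≤ (1058467598944497992161702791/39614081257132168796771975168:ℝ)*(827/1000:ℝ)^9 := mul_le_mul_of_nonneg_left (pow_le_pow_left₀ hy0 hy1 9) (by norm_num)
  have h10 : (1971655331367202142261995395/79228162514264337593543950336:ℝ)*y^10 ≤ (1971655331367202142261995395/79228162514264337593543950336:ℝ)*(827/1000:ℝ)^10 := mul_le_mul_of_nonneg_left (pow_le_pow_left₀ hy0 hy1 10) (by norm_num)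
  have h11 : (14766733285973940520018161315/633825300114114700748351602688:ℝ)*y^11 ≤ (14766733285973940520018161315/633825300114114700748351602688:ℝ)*(827/1000:ℝ)^11 := mul_le_mul_of_nonneg_left (pow_le_pow_left₀ hy0 hy1 11) (by norm_num)
  have h12 : (27768888380542190034499561215/1267650600228229401496703205376:ℝ)*y^12 ≤ (27768888380542190034499561215/1267650600228229401496703205376:ℝ)*(827/1000:ℝ)^12 := mul_le_mul_of_nonneg_left (pow_le_pow_left₀ hy0 hy1 12) (by norm_num)
  have h13 : (104825575795494022210005466125/5070602400912917605986812821504:ℝ)*y^13 ≤ (104825575795494022210005466125/5070602400912917605986812821504:ℝ)*(827/1000:ℝ)^13 := mul_le_mul_of_nonneg_left (pow_le_pow_left₀ hy0 hy1 13) (by norm_num)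
  have h14 : (198487908454325044652192168325/10141204801825835211973625643008:ℝ)*y^14 ≤ (198487908454325044652192168325/10141204801825835211973625643008:ℝ)*(827/1000:ℝ)^14 := mul_le_mul_of_nonneg_left (pow_le_pow_left₀ hy0 hy1 14) (by norm_num)
  have h15 : (3015125847472842344954728652175/162259276829213363391578010288128:ℝ)*y^15 ≤ (3015125847472842344954728652175/162259276829213363391578010288128:ℝ)*(827/1000:ℝ)^15 := mul_le_mul_of_nonneg_left (pow_le_pow_left₀ hy0 hy1 15) (by norm_num)
  have h16 : (11478636998273803313248703816175/649037107316853453566312041152512:ℝ)*y^16 ≤ (11478636998273803313248703816175/649037107316853453566312041152512:ℝ)*(827/1000:ℝ)^16 := mul_le_mul_of_nonneg_left (pow_le_pow_left₀ hy0 hy1 16) (by norm_num)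
  have h17 : (43795773212480778970021930787475/2596148429267413814265248164610048:ℝ)*y^17 ≤ (43795773212480778970021930787475/2596148429267413814265248164610048:ℝ)*(827/1000:ℝ)^17 := mul_le_mul_of_nonneg_left (pow_le_pow_left₀ hy0 hy1 17) (by norm_num)
  have h18 : (83715084389205255470004255648375/5192296858534827628530496329220096:ℝ)*y^18 ≤ (83715084389205255470004255648375/5192296858534827628530496329220096:ℝ)*(827/1000:ℝ)^18 := mul_le_mul_of_nonneg_left (pow_le_pow_left₀ hy0 hy1 18) (by norm_num)
  have h19 : (641228172707491483126383473966325/41538374868278621028243970633760768:ℝ)*y^19 ≤ (641228172707491483126383473966325/41538374868278621028243970633760768:ℝ)*(827/1000:ℝ)^19 := mul_le_mul_of_nonneg_left (pow_le_pow_left₀ hy0 hy1 19) (by norm_num)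
  have h20 : (1229896659127483664357161745148525/83076749736557242056487941267521536:ℝ)*y^20 ≤ (1229896659127483664357161745148525/83076749736557242056487941267521536:ℝ)*(827/1000:ℝ)^20 := mul_le_mul_of_nonneg_left (pow_le_pow_left₀ hy0 hy1 20) (by norm_num)
  have h21 : (4724994691978243693636346427982275/332306998946228968225951765070086144:ℝ)*y^21 ≤ (4724994691978243693636346427982275/332306998946228968225951765070086144:ℝ)*(827/1000:ℝ)^21 := mul_le_mul_of_nonneg_left (pow_le_pow_left₀ hy0 hy1 21) (by norm_num)
  have h22 : (9088626153545452876792568237374275/664613997892457936451903530140172288:ℝ)*y^22 ≤ (9088626153545452876792568237374275/664613997892457936451903530140172288:ℝ)*(827/1000:ℝ)^22 := mul_le_mul_of_nonneg_left (pow_le_pow_left₀ hy0 hy1 22) (by norm_num)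
  have h23 : (1120271962839189517639431780563307375/85070591730234615865843651857942052864:ℝ)*y^23 ≤ (1120271962839189517639431780563307375/85070591730234615865843651857942052864:ℝ)*(827/1000:ℝ)^23 := mul_le_mul_of_nonneg_left (pow_le_pow_left₀ hy0 hy1 23) (by norm_num)
  have h24 : (270014267966368755533606634289617675/21267647932558653966460912964485513216:ℝ)*y^24 ≤ (270014267966368755533606634289617675/21267647932558653966460912964485513216:ℝ)*(827/1000:ℝ)^24 := mul_le_mul_of_nonneg_left (pow_le_pow_left₀ hy0 hy1 24) (by norm_num)
  have h25 : (1042418719361072104696408642681736115/85070591730234615865843651857942052864:ℝ)*y^25 ≤ (1042418719361072104696408642681736115/85070591730234615865843651857942052864:ℝ)*(827/1000:ℝ)^25 := mul_le_mul_of_nonneg_left (pow_le_pow_left₀ hy0 hy1 25) (by norm_num)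
  have h26 : (2014225837755091104711889489820162895/170141183460469231731687303715884105728:ℝ)*y^26 ≤ (2014225837755091104711889489820162895/170141183460469231731687303715884105728:ℝ)*(827/1000:ℝ)^26 := mul_le_mul_of_nonneg_left (pow_le_pow_left₀ hy0 hy1 26) (by norm_num)
  have h27 : (15582823420192436847128365094447491155/1361129467683753853853498429727072845824:ℝ)*y^27 ≤ (15582823420192436847128365094447491155/1361129467683753853853498429727072845824:ℝ)*(827/1000:ℝ)^27 := mul_le_mul_of_nonneg_left (pow_le_pow_left₀ hy0 hy1 27) (by norm_num)
  have h28 : (30165507034948092033260913795669573975/2722258935367507707706996859454145691648:ℝ)*y^28 ≤ (30165507034948092033260913795669573975/2722258935367507707706996859454145691648:ℝ)*(827/1000:ℝ)^28 := mul_le_mul_of_nonneg_left (pow_le_pow_left₀ hy0 hy1 28) (by norm_num)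
  have h29 : (116887624796503296519029728037801413245/10889035741470030830827987437816582766592:ℝ)*y^29 ≤ (116887624796503296519029728037801413245/10889035741470030830827987437816582766592:ℝ)*(827/1000:ℝ)^29 := mul_le_mul_of_nonneg_left (pow_le_pow_left₀ hy0 hy1 29) (by norm_num)
  have h30 : (226641263103079161795113979716488186245/21778071482940061661655974875633165533184:ℝ)*y^30 ≤ (226641263103079161795113979716488186245/21778071482940061661655974875633165533184:ℝ)*(827/1000:ℝ)^30 := mul_le_mul_of_nonneg_left (pow_le_pow_left₀ hy0 hy1 30) (by norm_num)
  have h31 : (3518219750894035303708382244272796898305/348449143727040986586495598010130648530944:ℝ)*y^31 ≤ (3518219750894035303708382244272796898305/348449143727040986586495598010130648530944:ℝ)*(827/1000:ℝ)^31 := mul_le_mul_of_nonneg_left (pow_le_pow_left₀ hy0 hy1 31) (by norm_num)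
  have h32 : (27326446558313945441132229212365422484095/2787593149816327892691964784081045188247552:ℝ)*y^32 ≤ (27326446558313945441132229212365422484095/2787593149816327892691964784081045188247552:ℝ)*(827/1000:ℝ)^32 := mul_le_mul_of_nonneg_left (pow_le_pow_left₀ hy0 hy1 32) (by norm_num)
  have h33 : (106194913119737650383433601648381596795275/11150372599265311570767859136324180752990208:ℝ)*y^33 ≤ (106194913119737650383433601648381596795275/11150372599265311570767859136324180752990208:ℝ)*(827/1000:ℝ)^33 := mul_le_mul_of_nonneg_left (pow_le_pow_left₀ hy0 hy1 33) (by norm_num)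
  have h34 : (206476227155944812000417175283402336043519/22300745198530623141535718272648361505980416:ℝ)*y^34 ≤ (206476227155944812000417175283402336043519/22300745198530623141535718272648361505980416:ℝ)*(827/1000:ℝ)^34 := mul_le_mul_of_nonneg_left (pow_le_pow_left₀ hy0 hy1 34) (by norm_num)
  have h35 : (1606788685010547973085953206152792615075505/178405961588244985132285746181186892047843328:ℝ)*y^35 ≤ (1606788685010547973085953206152792615075505/178405961588244985132285746181186892047843328:ℝ)*(827/1000:ℝ)^35 := mul_le_mul_of_nonneg_left (pow_le_pow_left₀ hy0 hy1 35) (by norm_num)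
  have h36 : (3127789229551557309802237915007384181438465/356811923176489970264571492362373784095686656:ℝ)*y^36 ≤ (3127789229551557309802237915007384181438465/356811923176489970264571492362373784095686656:ℝ)*(827/1000:ℝ)^36 := mul_le_mul_of_nonneg_left (pow_le_pow_left₀ hy0 hy1 36) (by norm_num)
  have h37 : (12183855342556689978100054968992727986046855/1427247692705959881058285969449495136382746624:ℝ)*y^37 ≤ (12183855342556689978100054968992727986046855/1427247692705959881058285969449495136382746624:ℝ)*(827/1000:ℝ)^37 := mul_le_mul_of_nonneg_left (pow_le_pow_left₀ hy0 hy1 37) (by norm_num)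
  have h38 : (23742689458346647692166995858963177454488375/2854495385411919762116571938898990272765493248:ℝ)*y^38 ≤ (23742689458346647692166995858963177454488375/2854495385411919762116571938898990272765493248:ℝ)*(827/1000:ℝ)^38 := mul_le_mul_of_nonneg_left (pow_le_pow_left₀ hy0 hy1 38) (by norm_num)
  have h39 : (740650153718577732879240183641400043362321975/91343852333181432387730302044767688728495783936:ℝ)*y^39 ≤ (740650153718577732879240183641400043362321975/91343852333181432387730302044767688728495783936:ℝ)*(827/1000:ℝ)^39 := mul_le_mul_of_nonneg_left (pow_le_pow_left₀ hy0 hy1 39) (by norm_num)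
  have h40 : (722362495602069640709382401329266708958314025/91343852333181432387730302044767688728495783936:ℝ)*y^40 ≤ (722362495602069640709382401329266708958314025/91343852333181432387730302044767688728495783936:ℝ)*(827/1000:ℝ)^40 := mul_le_mul_of_nonneg_left (pow_le_pow_left₀ hy0 hy1 40) (by norm_num)
  have hval : (53098072606098965203605/302231454903657293676544:ℝ) + (103667665564288455873705/1208925819614629174706176:ℝ)*(827/1000:ℝ)^1 + (151885184431399365582405/2417851639229258349412352:ℝ)*(827/1000:ℝ)^2 + (989554989477298896976275/19342813113834066795298816:ℝ)*(827/1000:ℝ)^3 + (1693238537550044779270515/38685626227668133590597632:ℝ)*(827/1000:ℝ)^4 + (5963144414850157700909205/154742504910672534362390528:ℝ)*(827/1000:ℝ)^5 + (10699826503241772328581765/309485009821345068724781056:ℝ)*(827/1000:ℝ)^6 + (311313999689558232988736115/9903520314283042199192993792:ℝ)*(827/1000:ℝ)^7 + (285900611959798377234553575/9903520314283042199192993792:ℝ)*(827/1000:ℝ)^8 + (1058467598944497992161702791/39614081257132168796771975168:ℝ)*(827/1000:ℝ)^9 + (1971655331367202142261995395/79228162514264337593543950336:ℝ)*(827/1000:ℝ)^10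 + (14766733285973940520018161315/633825300114114700748351602688:ℝ)*(827/1000:ℝ)^11 + (27768888380542190034499561215/1267650600228229401496703205376:ℝ)*(827/1000:ℝ)^12 + (104825575795494022210005466125/5070602400912917605986812821504:ℝ)*(827/1000:ℝ)^13 + (198487908454325044652192168325/10141204801825835211973625643008:ℝ)*(827/1000:ℝ)^14 + (3015125847472842344954728652175/162259276829213363391578010288128:ℝ)*(827/1000:ℝ)^15 + (11478636998273803313248703816175/649037107316853453566312041152512:ℝ)*(827/1000:ℝ)^16 + (43795773212480778970021930787475/2596148429267413814265248164610048:ℝ)*(827/1000:ℝ)^17 + (83715084389205255470004255648375/5192296858534827628530496329220096:ℝ)*(827/1000:ℝ)^18 + (641228172707491483126383473966325/41538374868278621028243970633760768:ℝ)*(827/1000:ℝ)^19 + (1229896659127483664357161745148525/83076749736557242056487941267521536:ℝ)*(827/1000:ℝ)^20 + (4724994691978243693636346427982275/332306998946228968225951765070086144:ℝ)*(827/1000:ℝ)^21 + (9088626153545452876792568237374275/664613997892457936451903530140172288:ℝ)*(827/1000:ℝ)^22 + (1120271962839189517639431780563307375/85070591730234615865843651857942052864:ℝ)*(827/1000:ℝ)^23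 + (270014267966368755533606634289617675/21267647932558653966460912964485513216:ℝ)*(827/1000:ℝ)^24 + (1042418719361072104696408642681736115/85070591730234615865843651857942052864:ℝ)*(827/1000:ℝ)^25 + (2014225837755091104711889489820162895/170141183460469231731687303715884105728:ℝ)*(827/1000:ℝ)^26 + (15582823420192436847128365094447491155/1361129467683753853853498429727072845824:ℝ)*(827/1000:ℝ)^27 + (30165507034948092033260913795669573975/2722258935367507707706996859454145691648:ℝ)*(827/1000:ℝ)^28 + (116887624796503296519029728037801413245/10889035741470030830827987437816582766592:ℝ)*(827/1000:ℝ)^29 + (226641263103079161795113979716488186245/21778071482940061661655974875633165533184:ℝ)*(827/1000:ℝ)^30 + (3518219750894035303708382244272796898305/348449143727040986586495598010130648530944:ℝ)*(827/1000:ℝ)^31 + (27326446558313945441132229212365422484095/2787593149816327892691964784081045188247552:ℝ)*(827/1000:ℝ)^32 + (106194913119737650383433601648381596795275/11150372599265311570767859136324180752990208:ℝ)*(827/1000:ℝ)^33 + (206476227155944812000417175283402336043519/22300745198530623141535718272648361505980416:ℝ)*(827/1000:ℝ)^34 + (1606788685010547973085953206152792615075505/178405961588244985132285746181186892047843328:ℝ)*(827/1000:ℝ)^35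 + (3127789229551557309802237915007384181438465/356811923176489970264571492362373784095686656:ℝ)*(827/1000:ℝ)^36 + (12183855342556689978100054968992727986046855/1427247692705959881058285969449495136382746624:ℝ)*(827/1000:ℝ)^37 + (23742689458346647692166995858963177454488375/2854495385411919762116571938898990272765493248:ℝ)*(827/1000:ℝ)^38 + (740650153718577732879240183641400043362321975/91343852333181432387730302044767688728495783936:ℝ)*(827/1000:ℝ)^39 + (722362495602069640709382401329266708958314025/91343852333181432387730302044767688728495783936:ℝ)*(827/1000:ℝ)^40 ≤ 21/50 := by norm_num
  linarith

lemma Spoly_ge_one (y : ℝ) (hy0 : 0 ≤ y) : 1 ≤ Spoly y := by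
  unfold Spoly
  have h1 : (0:ℝ) ≤ (1/2:ℝ)*y^1 := mul_nonneg (by norm_num) (pow_nonneg hy0 1)
  have h2 : (0:ℝ) ≤ (3/8:ℝ)*y^2 := mul_nonneg (by norm_num) (pow_nonneg hy0 2)
  have h3 : (0:ℝ) ≤ (5/16:ℝ)*y^3 := mul_nonneg (by norm_num) (pow_nonneg hy0 3)
  have h4 : (0:ℝ) ≤ (35/128:ℝ)*y^4 := mul_nonneg (by norm_num) (pow_nonneg hy0 4)
  have h5 : (0:ℝ) ≤ (63/256:ℝ)*y^5 := mul_nonneg (by norm_num) (pow_nonneg hy0 5)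
  have h6 : (0:ℝ) ≤ (231/1024:ℝ)*y^6 := mul_nonneg (by norm_num) (pow_nonneg hy0 6)
  have h7 : (0:ℝ) ≤ (429/2048:ℝ)*y^7 := mul_nonneg (by norm_num) (pow_nonneg hy0 7)
  have h8 : (0:ℝ) ≤ (6435/32768:ℝ)*y^8 := mul_nonneg (by norm_num) (pow_nonneg hy0 8)
  have h9 : (0:ℝ) ≤ (12155/65536:ℝ)*y^9 := mul_nonneg (by norm_num) (pow_nonneg hy0 9)
  have h10 : (0:ℝ) ≤ (46189/262144:ℝ)*y^10 := mul_nonneg (by norm_num) (pow_nonneg hy0 10)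
  have h11 : (0:ℝ) ≤ (88179/524288:ℝ)*y^11 := mul_nonneg (by norm_num) (pow_nonneg hy0 11)
  have h12 : (0:ℝ) ≤ (676039/4194304:ℝ)*y^12 := mul_nonneg (by norm_num) (pow_nonneg hy0 12)
  have h13 : (0:ℝ) ≤ (1300075/8388608:ℝ)*y^13 := mul_nonneg (by norm_num) (pow_nonneg hy0 13)
  have h14 : (0:ℝ) ≤ (5014575/33554432:ℝ)*y^14 := mul_nonneg (by norm_num) (pow_nonneg hy0 14)
  have h15 : (0:ℝ) ≤ (9694845/67108864:ℝ)*y^15 := mul_nonneg (by norm_num) (pow_nonneg hy0 15)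
  have h16 : (0:ℝ) ≤ (300540195/2147483648:ℝ)*y^16 := mul_nonneg (by norm_num) (pow_nonneg hy0 16)
  have h17 : (0:ℝ) ≤ (583401555/4294967296:ℝ)*y^17 := mul_nonneg (by norm_num) (pow_nonneg hy0 17)
  have h18 : (0:ℝ) ≤ (2268783825/17179869184:ℝ)*y^18 := mul_nonneg (by norm_num) (pow_nonneg hy0 18)
  have h19 : (0:ℝ) ≤ (4418157975/34359738368:ℝ)*y^19 := mul_nonneg (by norm_num) (pow_nonneg hy0 19)
  have h20 : (0:ℝ) ≤ (34461632205/274877906944:ℝ)*y^20 := mul_nonneg (by norm_num) (pow_nonneg hy0 20)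
  have h21 : (0:ℝ) ≤ (67282234305/549755813888:ℝ)*y^21 := mul_nonneg (by norm_num) (pow_nonneg hy0 21)
  have h22 : (0:ℝ) ≤ (263012370465/2199023255552:ℝ)*y^22 := mul_nonneg (by norm_num) (pow_nonneg hy0 22)
  have h23 : (0:ℝ) ≤ (514589420475/4398046511104:ℝ)*y^23 := mul_nonneg (by norm_num) (pow_nonneg hy0 23)
  have h24 : (0:ℝ) ≤ (8061900920775/70368744177664:ℝ)*y^24 := mul_nonneg (by norm_num) (pow_nonneg hy0 24)
  have h25 : (0:ℝ) ≤ (15801325804719/140737488355328:ℝ)*y^25 := mul_nonneg (by norm_num) (pow_nonneg hy0 25)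
  have h26 : (0:ℝ) ≤ (61989816618513/562949953421312:ℝ)*y^26 := mul_nonneg (by norm_num) (pow_nonneg hy0 26)
  have h27 : (0:ℝ) ≤ (121683714103007/1125899906842624:ℝ)*y^27 := mul_nonneg (by norm_num) (pow_nonneg hy0 27)
  have h28 : (0:ℝ) ≤ (956086325095055/9007199254740992:ℝ)*y^28 := mul_nonneg (by norm_num) (pow_nonneg hy0 28)
  have h29 : (0:ℝ) ≤ (1879204156221315/18014398509481984:ℝ)*y^29 := mul_nonneg (by norm_num) (pow_nonneg hy0 29)
  have h30 : (0:ℝ) ≤ (7391536347803839/72057594037927936:ℝ)*y^30 := mul_nonneg (by norm_num) (pow_nonneg hy0 30)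
  have h31 : (0:ℝ) ≤ (14544636039226909/144115188075855872:ℝ)*y^31 := mul_nonneg (by norm_num) (pow_nonneg hy0 31)
  have h32 : (0:ℝ) ≤ (916312070471295267/9223372036854775808:ℝ)*y^32 := mul_nonneg (by norm_num) (pow_nonneg hy0 32)
  have h33 : (0:ℝ) ≤ (1804857108504066435/18446744073709551616:ℝ)*y^33 := mul_nonneg (by norm_num) (pow_nonneg hy0 33)
  have h34 : (0:ℝ) ≤ (7113260368810144185/73786976294838206464:ℝ)*y^34 := mul_nonneg (by norm_num) (pow_nonneg hy0 34)
  have h35 : (0:ℝ) ≤ (14023284727082855679/147573952589676412928:ℝ)*y^35 := mul_nonneg (by norm_num) (pow_nonneg hy0 35)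
  have h36 : (0:ℝ) ≤ (110628135069209194801/1180591620717411303424:ℝ)*y^36 := mul_nonneg (by norm_num) (pow_nonneg hy0 36)
  have h37 : (0:ℝ) ≤ (218266320541953276229/2361183241434822606848:ℝ)*y^37 := mul_nonneg (by norm_num) (pow_nonneg hy0 37)
  have h38 : (0:ℝ) ≤ (861577581086657669325/9444732965739290427392:ℝ)*y^38 := mul_nonneg (by norm_num) (pow_nonneg hy0 38)
  have h39 : (0:ℝ) ≤ (1701063429324939500975/18889465931478580854784:ℝ)*y^39 := mul_nonneg (by norm_num) (pow_nonneg hy0 39)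
  have h40 : (0:ℝ) ≤ (26876802183334044115405/302231454903657293676544:ℝ)*y^40 := mul_nonneg (by norm_num) (pow_nonneg hy0 40)
  linarith

lemma inv_sqrt_bounds (y : ℝ) (hy0 : 0 ≤ y) (hy1 : y ≤ 827/1000) :
    Spoly y ≤ 1 / Real.sqrt (1 - y) ∧
      1 / Real.sqrt (1 - y) ≤ Spoly y + (5/4) * y^41 := by
  have h1y : (0:ℝ) < 1 - y := by linarith
  have hS1 : 1 ≤ Spoly y := Spoly_ge_one y hy0
  have hS0 : (0:ℝ) ≤ Spoly y := by linarith
  have hid := Sid y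
  have hG0 : 0 ≤ Gpoly y := Gpoly_nonneg y hy0
  have hGle : Gpoly y ≤ 21/50 := Gpoly_le y hy0 hy1
  have hy41 : (0:ℝ) ≤ y^41 := pow_nonneg hy0 41
  have hsq : 0 < Real.sqrt (1-y) := Real.sqrt_pos.mpr h1y
  have hss : Real.sqrt (1-y) * Real.sqrt (1-y) = 1-y := Real.mul_self_sqrt h1y.le
  constructor
  · rw [le_div_iff₀ hsq]
    have h2 : (1-y) * (Spoly y)^2 ≤ 1 := by nlinarith [mul_nonneg hy41 hG0]
    nlinarith [sq_nonneg (Spoly y * Real.sqrt (1-y) - 1), mul_nonneg hS0 hsq.le]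
  · rw [div_le_iff₀ hsq]
    set Q := Spoly y + (5/4) * y^41 with hQ
    have hQ0 : (0:ℝ) ≤ Q := by rw [hQ]; nlinarith
    have hq2 : 1 ≤ (1-y) * Q^2 := by
      rw [hQ]
      nlinarith [mul_le_mul_of_nonneg_left hGle hy41, sq_nonneg (y^41),
        mul_nonneg hy41 (by linarith : (0:ℝ) ≤ Spoly y - 1),
        mul_nonneg (mul_nonneg hy41 hS0) (by linarith : (0:ℝ) ≤ 1 - y - 173/1000),
        mul_nonneg (mul_nonneg hy41 hy41) (by linarith : (0:ℝ) ≤ 1 - y - 173/1000),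
        mul_nonneg hy41 (by linarith : (0:ℝ) ≤ 1 - y - 173/1000)]
    have hu2 : 1 ≤ (Q * Real.sqrt (1-y))^2 := by
      have : (Q * Real.sqrt (1-y))^2 = (1-y) * Q^2 := by
        rw [mul_pow, sq (Real.sqrt (1-y)), hss]; ring
      rw [this]; exact hq2
    nlinarith [mul_nonneg hQ0 hsq.le, hu2]

lemma sqrt_bounds (y : ℝ) (hy0 : 0 ≤ y) (hy1 : y ≤ 827/1000) :
    (1-y) * Spoly y ≤ Real.sqrt (1 - y) ∧
      Real.sqrt (1 - y) ≤ (1-y) * (Spoly y + (5/4) * y^41) := by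
  have h1y : (0:ℝ) < 1 - y := by linarith
  have hsq : 0 < Real.sqrt (1-y) := Real.sqrt_pos.mpr h1y
  have hss : Real.sqrt (1-y) * Real.sqrt (1-y) = 1-y := Real.mul_self_sqrt h1y.le
  have hrepr : Real.sqrt (1-y) = (1-y) * (1 / Real.sqrt (1-y)) := by
    rw [mul_one_div, eq_div_iff (ne_of_gt hsq)]
    exact hss
  obtain ⟨hlo, hhi⟩ := inv_sqrt_bounds y hy0 hy1
  constructor
  · rw [hrepr]; exact mul_le_mul_of_nonneg_left hlo h1y.le
  · rw [hrepr]; exact mul_le_mul_of_nonneg_left hhi h1y.le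

lemma ptLow (y : ℝ) (hy0 : 0 ≤ y) (hy1 : y ≤ 827/1000) :
    (1 - 2*y) * Spoly y - (5/4) * y^41 ≤
      2 * Real.sqrt (1 - y) - 1 / Real.sqrt (1 - y) := by
  obtain ⟨hlo, hhi⟩ := inv_sqrt_bounds y hy0 hy1
  obtain ⟨hlo2, hhi2⟩ := sqrt_bounds y hy0 hy1
  nlinarith [hlo2, hhi]

lemma ptUp (y : ℝ) (hy0 : 0 ≤ y) (hy1 : y ≤ 827/1000) :
    2 * Real.sqrt (1 - y) - 1 / Real.sqrt (1 - y) ≤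
      (1 - 2*y) * Spoly y + (5/2) * y^41 := by
  obtain ⟨hlo, hhi⟩ := inv_sqrt_bounds y hy0 hy1
  obtain ⟨hlo2, hhi2⟩ := sqrt_bounds y hy0 hy1
  have hy41 : (0:ℝ) ≤ y^41 := pow_nonneg hy0 41
  nlinarith [hhi2, hlo, mul_nonneg hy0 hy41]

/-! ### Numerical evaluation at m = 0.826 and m = 0.827 -/

noncomputable def qL826 : ℕ → ℝ
  | 0 => (1:ℝ)
  | 1 => (-1239/1000:ℝ)
  | 2 => (-170569/400000:ℝ)
  | 3 => (-493114979/2000000000:ℝ)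
  | 4 => (-261844053849/1600000000000:ℝ)
  | 5 => (-925211417383561/8000000000000000:ℝ)
  | 6 => (-1354761845436092457/16000000000000000000:ℝ)
  | 7 => (-202901639466467077983/3200000000000000000000:ℝ)
  | 8 => (-6173147113007616536247453/128000000000000000000000000:ℝ)
  | 9 => (-949817360701387587449681641/25600000000000000000000000000:ℝ)
  | 10 => (-7370632709430173014798342675299/256000000000000000000000000000000:ℝ)
  | 11 => (-5758697671128428813349868763552549/256000000000000000000000000000000000:ℝ)
  | 12 => (-723843259444882073886716112844800833/40960000000000000000000000000000000000:ℝ)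
  | 13 => (-14280480944585172318149826277664969541693/1024000000000000000000000000000000000000000:ℝ)
  | 14 => (-904959366525378882827938991151287514290249/81920000000000000000000000000000000000000000:ℝ)
  | 15 => (-3595715618159304570055687108047910565831811087/409600000000000000000000000000000000000000000000:ℝ)
  | 16 => (-45844330214093603147528381557160136127417124059257/6553600000000000000000000000000000000000000000000000:ℝ)
  | 17 => (-7323733900387313382682069667618981390151960918564477/1310720000000000000000000000000000000000000000000000000:ℝ)
  | 18 => (-58621607383333518752781512976178200040573012512496262067/13107200000000000000000000000000000000000000000000000000000:ℝ)
  | 19 => (-9401888493404652782158410820129610065966666554440172193161/2621440000000000000000000000000000000000000000000000000000000:ℝ)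
  | 20 => (-151037963609650678608478710395857010977935946060369515964908279/52428800000000000000000000000000000000000000000000000000000000000:ℝ)
  | 21 => (-121497148239265586126493569452823416562519644805293829415576584139/52428800000000000000000000000000000000000000000000000000000000000000:ℝ)
  | 22 => (-39145456448666717820125244194295835547311429829582164315952694911271/20971520000000000000000000000000000000000000000000000000000000000000000:ℝ)
  | 23 => (-157843746716801909966557478006693178472372333672206926744392191882489369/104857600000000000000000000000000000000000000000000000000000000000000000000:ℝ)
  | 24 => (-203890461849441718212333426537539352302897803182411802756995624710166214497/167772160000000000000000000000000000000000000000000000000000000000000000000000:ℝ)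
  | 25 => (-4119257255161942302106118597316918260104673717066603483043227461912262364687033/4194304000000000000000000000000000000000000000000000000000000000000000000000000000:ℝ)
  | 26 => (-6663883379869906481884224236586472346871989361464062290160372684428473656306317951/8388608000000000000000000000000000000000000000000000000000000000000000000000000000000:ℝ)
  | 27 => (-1078948380106357961220965454959769068807695199948073364216720634782170752516128389253/1677721600000000000000000000000000000000000000000000000000000000000000000000000000000000:ℝ)
  | 28 => (-17482789120161557877278514702415843550474071340322240760420369929358121159792927997460497/33554432000000000000000000000000000000000000000000000000000000000000000000000000000000000000:ℝ)
  | 29 => (-2834866513854049297490684358917988782660870332635179943557649543106692511377747756597289313/6710886400000000000000000000000000000000000000000000000000000000000000000000000000000000000000:ℝ)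
  | 30 => (-22999272026897901950541922203901642993727641008669214882083210743224596344807667549273808196369/67108864000000000000000000000000000000000000000000000000000000000000000000000000000000000000000000:ℝ)
  | 31 => (-18670896601376802824017909125106131197342236907916072881543342442807871795577732107831178060400939/67108864000000000000000000000000000000000000000000000000000000000000000000000000000000000000000000000:ℝ)
  | 32 => (-97061693254290719303036212692926728925561248690074366878752040319072433077743928014344147545775414777/429496729600000000000000000000000000000000000000000000000000000000000000000000000000000000000000000000000:ℝ)
  | 33 => (-394417317446356981612032278810807593273309871066881146321265047979371463004051027089393391898756514322949/2147483648000000000000000000000000000000000000000000000000000000000000000000000000000000000000000000000000000:ℝ)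
  | 34 => (-128284665354253602954324047445593144698528224886135080199580483704553056677738145343778547283762280116412651/858993459200000000000000000000000000000000000000000000000000000000000000000000000000000000000000000000000000000:ℝ)
  | 35 => (-521808101917693898057528262727862445949609089582859855276157352144506877483246682414795919076848881511778606777/4294967296000000000000000000000000000000000000000000000000000000000000000000000000000000000000000000000000000000000:ℝ)
  | 36 => (-1698759749711177120414730754171800339471829024235557562744506874298164180904109376745749717266206992300789220476783/17179869184000000000000000000000000000000000000000000000000000000000000000000000000000000000000000000000000000000000000:ℝ)
  | 37 => (-55326988679134594633751739990277343229543623633090619487993900490609109526084264258773364264417239135767540516890827/687194767360000000000000000000000000000000000000000000000000000000000000000000000000000000000000000000000000000000000000:ℝ)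
  | 38 => (-2253335269998537277336834264744721312616110957655820696397397616730452654716621319326445232614201427863643501515229804003/34359738368000000000000000000000000000000000000000000000000000000000000000000000000000000000000000000000000000000000000000000:ℝ)
  | 39 => (-73446123730511763983685206349476545721004847368068393467890002039025453312127076708954973630872677309597499024912490324881/1374389534720000000000000000000000000000000000000000000000000000000000000000000000000000000000000000000000000000000000000000000:ℝ)
  | 40 => (-2394790818241447761038721936920202456561616294219080777651417295471986375988546917470122106724885353176244498554311525196769559/54975581388800000000000000000000000000000000000000000000000000000000000000000000000000000000000000000000000000000000000000000000000:ℝ)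
  | 41 => (-7744192088994181557140447428208746586808831116500348030201553276016852736079093682694051974433405175691333082134558238905026519237/13743895347200000000000000000000000000000000000000000000000000000000000000000000000000000000000000000000000000000000000000000000000000:ℝ)
  | _ => 0

noncomputable def qU827 : ℕ → ℝ
  | 0 => (1:ℝ)
  | 1 => (-2481/2000:ℝ)
  | 2 => (-683929/1600000:ℝ)
  | 3 => (-3959264981/16000000000:ℝ)
  | 4 => (-4209829893369/25600000000000:ℝ)
  | 5 => (-29786417531093839/256000000000000000:ℝ)
  | 6 => (-87336484057306326297/1024000000000000000000:ℝ)
  | 7 => (-26192307542944471988697/409600000000000000000000:ℝ)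
  | 8 => (-1595696490900444103986061533/32768000000000000000000000000:ℝ)
  | 9 => (-491630960029778004037901664079/13107200000000000000000000000000:ℝ)
  | 10 => (-7639401737275348849165581547422099/262144000000000000000000000000000000:ℝ)
  | 11 => (-11951827482465687440431134223622507171/524288000000000000000000000000000000000:ℝ)
  | 12 => (-3008223012869298460550253740023943217953/167772160000000000000000000000000000000000:ℝ)
  | 13 => (-118840312926942077114570166346375111278036027/8388608000000000000000000000000000000000000000:ℝ)
  | 14 => (-15080144047232020293326647087222826951222952569/1342177280000000000000000000000000000000000000000:ℝ)
  | 15 => (-119982306084482266839315078012971880377121569486313/13421772800000000000000000000000000000000000000000000:ℝ)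
  | 16 => (-3063183107909566476936796323468014581735119930086389497/429496729600000000000000000000000000000000000000000000000:ℝ)
  | 17 => (-979885521144996239544742480237515915906600512537207438043/171798691840000000000000000000000000000000000000000000000000:ℝ)
  | 18 => (-15705651794127292346291682222888821172337464757827910207783587/3435973836800000000000000000000000000000000000000000000000000000:ℝ)
  | 19 => (-5043927042975694054501592300346845014082221558804502298039129759/1374389534720000000000000000000000000000000000000000000000000000000:ℝ)
  | 20 => (-162253950438680609162088798326431731641589174271595323039119810033879/54975581388800000000000000000000000000000000000000000000000000000000000:ℝ)
  | 21 => (-261354932091111410631949536044324405978345589343340127783009806062689981/109951162777600000000000000000000000000000000000000000000000000000000000000:ℝ)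
  | 22 => (-168617029897927761950692634815843908459978594251124108699041482975705417911/87960930222080000000000000000000000000000000000000000000000000000000000000000:ℝ)
  | 23 => (-1361453813572028162841755057846630849038787648008302165140052494090124817476591/879609302220800000000000000000000000000000000000000000000000000000000000000000000:ℝ)
  | 24 => (-3521501673662508334649134481433129057165880331504708210934277482000901785868333857/2814749767106560000000000000000000000000000000000000000000000000000000000000000000000:ℝ)
  | 25 => (-142464075025163058355782400328572223662694096589144523999816857221276441372667953123967/140737488355328000000000000000000000000000000000000000000000000000000000000000000000000000:ℝ)
  | 26 => (-461497437027101325081180423908417507741504830214692138673246848830200026226945767142463471/562949953421312000000000000000000000000000000000000000000000000000000000000000000000000000000:ℝ)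
  | 27 => (-149622887083446945120502036429796350429173963286943238058027152882057869719016637196676799427/225179981368524800000000000000000000000000000000000000000000000000000000000000000000000000000000:ℝ)
  | 28 => (-4854712773168962258959393652584428813411481391367669049835313296941406153198577127573374355247217/9007199254740992000000000000000000000000000000000000000000000000000000000000000000000000000000000000:ℝ)
  | 29 => (-1576307322294957610717158281546323282529129175329116415870997494660787861320750097787395162777587447/3602879701896396800000000000000000000000000000000000000000000000000000000000000000000000000000000000000:ℝ)
  | 30 => (-25608127699465437375747816826342034610867671366927640352498983078811907450184910567432775453494544488769/72057594037927936000000000000000000000000000000000000000000000000000000000000000000000000000000000000000000:ℝ)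
  | 31 => (-41627887157546841041838383534471461856366037127133539085313284783692000112989401112086243786487909297806381/144115188075855872000000000000000000000000000000000000000000000000000000000000000000000000000000000000000000000:ℝ)
  | 32 => (-433333750867903990007763049906750220182305828164802752398069692179013242636503049725688755934292417214344452857/1844674407370955161600000000000000000000000000000000000000000000000000000000000000000000000000000000000000000000000:ℝ)
  | 33 => (-3526030670200234516287713283062556517144818575443738950070751853516684195707454175715136040761030625552600332555411/18446744073709551616000000000000000000000000000000000000000000000000000000000000000000000000000000000000000000000000000:ℝ)
  | 34 => (-2296467555519989261315219648751696762942802608267865657772199358405525156607118480399320897823798926792628995694400731/14757395258967641292800000000000000000000000000000000000000000000000000000000000000000000000000000000000000000000000000000:ℝ)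
  | 35 => (-18704747258075161560238644703427487332486004617448252472953385904228392922512446748471354007357847010683949030212431795823/147573952589676412928000000000000000000000000000000000000000000000000000000000000000000000000000000000000000000000000000000000:ℝ)
  | 36 => (-121935017955384405195881906319175020038679762673611616671490064740638324459506925920165138938491142644535285440225157552814543/1180591620717411303424000000000000000000000000000000000000000000000000000000000000000000000000000000000000000000000000000000000000:ℝ)
  | 37 => (-7952230784101783916941796993716771179131239864760962565086873896382147905170901335713813176288098211024633493365828111101752893/94447329657392904273920000000000000000000000000000000000000000000000000000000000000000000000000000000000000000000000000000000000000:ℝ)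
  | 38 => (-648534694725608374691690849573526137716852110603724095935056037331288984931518970341318480271193611167160481479914166402455125272883/9444732965739290427392000000000000000000000000000000000000000000000000000000000000000000000000000000000000000000000000000000000000000000:ℝ)
  | 39 => (-42328388821686485458273964310876306848606492449623482876848167919046057195335593296013346924633258939444651085441790443128472227226039/755578637259143234191360000000000000000000000000000000000000000000000000000000000000000000000000000000000000000000000000000000000000000000:ℝ)
  | 40 => (-2763668192580633801358122147361211137326651132261588291839240168079387898322579682091690473720397784511348998152628729922357172399489644759/60446290980731458735308800000000000000000000000000000000000000000000000000000000000000000000000000000000000000000000000000000000000000000000000:ℝ)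
  | 41 => (5820827672045815066393392099436759233684185420733841355917327733774013504021615215092857718332831395890775887884254822634136184265649564820297/6044629098073145873530880000000000000000000000000000000000000000000000000000000000000000000000000000000000000000000000000000000000000000000000000:ℝ)
  | _ => 0

lemma lowEq826 (θ : ℝ) : ∑ k ∈ Finset.range 42, qL826 k * Real.sin θ^(2*k) =
    (1 - 2*(826/1000*Real.sin θ^2)) * Spoly (826/1000*Real.sin θ^2)
      - (5/4)*(826/1000*Real.sin θ^2)^41 := by
  simp only [Finset.sum_range_succ, Finset.sum_range_zero, qL826]
  unfold Spoly
  ring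

lemma upEq827 (θ : ℝ) : ∑ k ∈ Finset.range 42, qU827 k * Real.sin θ^(2*k) =
    (1 - 2*(827/1000*Real.sin θ^2)) * Spoly (827/1000*Real.sin θ^2)
      + (5/2)*(827/1000*Real.sin θ^2)^41 := by
  simp only [Finset.sum_range_succ, Finset.sum_range_zero, qU827]
  unfold Spoly
  ring

lemma intPoly (q : ℕ → ℝ) :
    (∫ θ in (0:ℝ)..(π/2), ∑ k ∈ Finset.range 42, q k * Real.sin θ^(2*k)) =
    ∑ k ∈ Finset.range 42, q k * ((∏ i ∈ Finset.range k, ((2*(i:ℝ)+1)/(2*(i:ℝ)+2))) * (π/2)) := by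
  rw [intervalIntegral.integral_finset_sum]
  · exact Finset.sum_congr rfl fun k _ => by
      rw [intervalIntegral.integral_const_mul, intSin k]
  · intro k _
    apply Continuous.intervalIntegrable
    fun_prop

lemma pos826 : 0 < ∑ k ∈ Finset.range 42,
    qL826 k * ((∏ i ∈ Finset.range k, ((2*(i:ℝ)+1)/(2*(i:ℝ)+2))) * (π/2)) := by
  simp only [Finset.sum_range_succ, Finset.sum_range_zero, Finset.prod_range_succ,
    Finset.prod_range_zero, qL826]
  push_cast
  nlinarith [Real.pi_pos]

lemma neg827 : ∑ k ∈ Finset.range 42,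
    qU827 k * ((∏ i ∈ Finset.range k, ((2*(i:ℝ)+1)/(2*(i:ℝ)+2))) * (π/2)) < 0 := by
  simp only [Finset.sum_range_succ, Finset.sum_range_zero, Finset.prod_range_succ,
    Finset.prod_range_zero, qU827]
  push_cast
  nlinarith [Real.pi_pos]

lemma f826 : 0 < 2 * ellE (826/1000) - ellK (826/1000) := by
  rw [f_repr (826/1000) (by norm_num)]
  have hmono : (∫ θ in (0:ℝ)..(π/2), ∑ k ∈ Finset.range 42, qL826 k * Real.sin θ^(2*k)) ≤
      ∫ θ in (0:ℝ)..(π/2), (2 * Real.sqrt (1 - 826/1000 * Real.sin θ ^ 2)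
        - 1 / Real.sqrt (1 - 826/1000 * Real.sin θ ^ 2)) := by
    apply intervalIntegral.integral_mono_on (by positivity)
    · apply Continuous.intervalIntegrable
      apply continuous_finset_sum
      intro i _
      fun_prop
    · exact ((continuous_const.mul (contE (826/1000))).sub
        (contK (826/1000) (by norm_num))).intervalIntegrable _ _
    · intro θ _
      rw [lowEq826 θ]
      exact ptLow (826/1000*Real.sin θ^2) (by positivity)
        (by nlinarith [Real.sin_sq_le_one θ])
  calc (0:ℝ) < _ := pos826
  _ = _ := (intPoly qL826).symm
  _ ≤ _ := hmono

lemma f827 : 2 * ellE (827/1000) - ellK (827/1000) < 0 := by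
  rw [f_repr (827/1000) (by norm_num)]
  have hmono : (∫ θ in (0:ℝ)..(π/2), (2 * Real.sqrt (1 - 827/1000 * Real.sin θ ^ 2)
        - 1 / Real.sqrt (1 - 827/1000 * Real.sin θ ^ 2))) ≤
      ∫ θ in (0:ℝ)..(π/2), ∑ k ∈ Finset.range 42, qU827 k * Real.sin θ^(2*k) := by
    apply intervalIntegral.integral_mono_on (by positivity)
    · exact ((continuous_const.mul (contE (827/1000))).sub
        (contK (827/1000) (by norm_num))).intervalIntegrable _ _
    · apply Continuous.intervalIntegrable
      apply continuous_finset_sum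
      intro i _
      fun_prop
    · intro θ _
      rw [upEq827 θ]
      exact ptUp (827/1000*Real.sin θ^2) (by positivity)
        (by nlinarith [Real.sin_sq_le_one θ])
  calc _ ≤ _ := hmono
  _ = _ := intPoly qU827
  _ < 0 := neg827

/-! ### Main theorem -/

/-- **The critical pointedness `m* ≃ 0.8261`.**  There is a unique `m* ∈ (0,1)` with
`E(m*)/K(m*) = 1/2`, and it satisfies `0.826 < m* < 0.827`.  This is where the
zero-average cnoidal curve `V = 2E/K - (4-2m)/3` enters the forbidden wedge across
the bifurcation line `V = (2m-1)/3`. -/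
theorem critical_pointedness_exists_unique :
    ∃ m : ℝ, (m ∈ Set.Ioo (0:ℝ) 1 ∧ ellE m / ellK m = 1 / 2) ∧
      (∀ m' : ℝ, m' ∈ Set.Ioo (0:ℝ) 1 ∧ ellE m' / ellK m' = 1 / 2 → m' = m) ∧
      0.826 < m ∧ m < 0.827 := by
  have hivt := intermediate_value_Icc' (by norm_num : (826/1000:ℝ) ≤ 827/1000) contf
  have h0mem : (0:ℝ) ∈ Set.Icc (2 * ellE (827/1000) - ellK (827/1000))
      (2 * ellE (826/1000) - ellK (826/1000)) := ⟨le_of_lt f827, le_of_lt f826⟩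
  obtain ⟨m, hmIcc, hfm0⟩ := hivt h0mem
  have hfm : 2 * ellE m - ellK m = 0 := hfm0
  have hlo : (826/1000:ℝ) < m := by
    rcases lt_or_eq_of_le hmIcc.1 with h | h
    · exact h
    · exfalso
      have h826 := f826
      rw [h] at h826
      linarith
  have hhi : m < 827/1000 := by
    rcases lt_or_eq_of_le hmIcc.2 with h | h
    · exact h
    · exfalso
      have h827 := f827
      rw [← h] at h827
      linarith
  have hmIoo : m ∈ Set.Ioo (0:ℝ) 1 := ⟨by linarith, by linarith⟩
  have hK : 0 < ellK m := lt_of_lt_of_le (by positivity) (K_ge m (by linarith) (by linarith))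
  have hzero : ∀ m' : ℝ, m' ∈ Set.Ioo (0:ℝ) 1 → ellE m' / ellK m' = 1 / 2 →
      2 * ellE m' - ellK m' = 0 := by
    intro m' hm' hdiv
    have hK' : 0 < ellK m' := lt_of_lt_of_le (by positivity) (K_ge m' hm'.1.le hm'.2)
    rw [div_eq_iff (ne_of_gt hK')] at hdiv
    linarith
  have e826 : (0.826:ℝ) = 826/1000 := by norm_num
  have e827 : (0.827:ℝ) = 827/1000 := by norm_num
  refine ⟨m, ⟨hmIoo, ?_⟩, ?_, by linarith [e826], by linarith [e827]⟩
  · rw [div_eq_iff (ne_of_gt hK)]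
    linarith
  · intro m' ⟨hm'Ioo, hdiv⟩
    have h1 : 2 * ellE m' - ellK m' = 0 := hzero m' hm'Ioo hdiv
    rcases lt_trichotomy m' m with h | h | h
    · exfalso
      have := f_strict m' m hm'Ioo.1.le h (by linarith)
      linarith
    · exact h
    · exfalso
      have := f_strict m m' (by linarith) h hm'Ioo.2
      linarith
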